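/- Let 1 ≤ k ≤ n and let S∘T be a (k−1)-upper run of an n-DPDA in which the second part T is k-upper. Then S is (k−1)-upper. -/

import Mathlib

namespace HOPDA

/-- Iterated exponentiation `pow` from the paper:
`pow [] = 1`, `pow (m :: l) = (1 + m) ^ pow l - 1`. -/
def pow : List ℕ → ℕ
  | [] => 1
  | m :: l => (1 + m) ^ pow l - 1

/-! ### Higher-order stacks.

Stacks are represented positionlessly (nested lists of symbols); the positions of the
paper are represented by *addresses*: lists of bottom-based indices leading from the
outermost level into the stack.  Equality of contents is positionless equality `≅`. -/

inductive St (Γ : Type) : Type where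
  | leaf (γ : Γ) : St Γ
  | node (l : List (St Γ)) : St Γ

/-- `IsValid k s` : `s` is a stack of order `k` all of whose component stacks are nonempty. -/
def IsValid {Γ : Type} : ℕ → St Γ → Prop
  | 0, St.leaf _ => True
  | 0, St.node _ => False
  | _ + 1, St.leaf _ => False
  | k + 1, St.node l => l ≠ [] ∧ ∀ t ∈ l, IsValid k t

/-- The address of the topmost substack `d` levels below the surface
(indices count from the bottom of each stack, as the positions in the paper do). -/
def topAddr {Γ : Type} : St Γ → ℕ → List ℕ
  | _, 0 => []
  | St.leaf _, _ + 1 => []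
  | St.node l, d + 1 => (l.length - 1) :: topAddr (l.getLastD (St.node [])) d

/-- The substack sitting at a given address. -/
def sub? {Γ : Type} : St Γ → List ℕ → Option (St Γ)
  | s, [] => some s
  | St.leaf _, _ :: _ => none
  | St.node l, i :: p =>
      match l[i]? with
      | some t => sub? t p
      | none => none

/-- Modify the substack at a given address. -/
def modAt {Γ : Type} : St Γ → List ℕ → (St Γ → Option (St Γ)) → Option (St Γ)
  | s, [], f => f s
  | St.leaf _, _ :: _, _ => none
  | St.node l, i :: p, f =>
      match l[i]? with
      | none => none
      | some t =>
          match modAt t p f with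
          | none => none
          | some t' => some (St.node (l.set i t'))

/-- The topmost stack symbol of an order-`n` stack. -/
def topLeaf? {Γ : Type} (n : ℕ) (s : St Γ) : Option Γ :=
  match sub? s (topAddr s n) with
  | some (St.leaf γ) => some γ
  | _ => none

/-- The content of the topmost `k`-stack of an order-`n` stack (`top^k`);
equality of these contents is positionless equality `≅` of topmost `k`-stacks. -/
def topStk {Γ : Type} (n : ℕ) (s : St Γ) (k : ℕ) : Option (St Γ) :=
  sub? s (topAddr s (n - k))

/-- Number of components of the (composite) stack at the given address. -/
def sizeAt {Γ : Type} (s : St Γ) (p : List ℕ) : ℕ :=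
  match sub? s p with
  | some (St.node l) => l.length
  | _ => 0

/-- Remove the topmost component of a composite stack
(defined only when it has at least two components). -/
def popStk {Γ : Type} : St Γ → Option (St Γ)
  | St.node l => if 2 ≤ l.length then some (St.node l.dropLast) else none
  | St.leaf _ => none

/-- Duplicate the topmost `(r-1)`-stack of an `r`-stack,
replacing the topmost symbol of the new copy by `γ`. -/
def dupTop {Γ : Type} (r : ℕ) (γ : Γ) : St Γ → Option (St Γ)
  | St.node l =>
      match l.getLast? with
      | none => none
      | some t =>
          match modAt t (topAddr t (r - 1)) (fun u =>
            match u with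
            | St.leaf _ => some (St.leaf γ)
            | St.node _ => none) with
          | none => none
          | some t' => some (St.node (l ++ [t']))
  | St.leaf _ => none

/-- `push^r_γ` on an order-`n` stack. -/
def pushOp {Γ : Type} (n r : ℕ) (γ : Γ) (s : St Γ) : Option (St Γ) :=
  modAt s (topAddr s (n - r)) (dupTop r γ)

/-- `pop^r` on an order-`n` stack. -/
def popOp {Γ : Type} (n r : ℕ) (s : St Γ) : Option (St Γ) :=
  modAt s (topAddr s (n - r)) popStk

/-- Stack operations of an order-`n` pushdown automaton. -/
inductive Op (Γ : Type) where
  | pop (k : ℕ)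
  | push (k : ℕ) (γ : Γ)

def applyOp {Γ : Type} (n : ℕ) : Op Γ → St Γ → Option (St Γ)
  | Op.pop k, s => if 1 ≤ k ∧ k ≤ n then popOp n k s else none
  | Op.push k γ, s => if 1 ≤ k ∧ k ≤ n then pushOp n k γ s else none

/-- The one-step history function on addresses: for the address of a substack of
`op(s)` it returns the address of the substack of `s` from which it originates. -/
def histStep {Γ : Type} (n : ℕ) : Op Γ → St Γ → List ℕ → List ℕ
  | Op.pop _, _, p => p
  | Op.push r _, s, p =>
      let m := n - r
      let ta := topAddr s m
      let sz := sizeAt s ta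
      if p.take (m + 1) = ta ++ [sz] then p.set m (sz - 1) else p

/-! ### Deterministic order-`n` pushdown automata -/

inductive Trans (A Γ Q : Type) where
  | read (f : A → Q)
  | op (q : Q) (o : Op Γ)

/-- A deterministic order-`n` pushdown automaton. -/
structure DPDA (n : ℕ) (A Γ : Type) where
  Q : Type
  finQ : Finite Q
  qI : Q
  γI : Γ
  F : Set Q
  δ : Q → Γ → Trans A Γ Q
  read_inj : ∀ q γ f, δ q γ = Trans.read f → Function.Injective f

/-- One step of an `n`-DPDA; the label records the letter read (if any). -/
inductive Step {n : ℕ} {A Γ : Type} (D : DPDA n A Γ) :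
    D.Q × St Γ → Option A → D.Q × St Γ → Prop where
  | read {q : D.Q} {s : St Γ} {γ : Γ} {f : A → D.Q} (a : A) :
      IsValid n s → topLeaf? n s = some γ → D.δ q γ = Trans.read f →
      Step D (q, s) (some a) (f a, s)
  | op {q : D.Q} {s s' : St Γ} {γ : Γ} {q' : D.Q} {o : Op Γ} :
      IsValid n s → topLeaf? n s = some γ → D.δ q γ = Trans.op q' o →
      applyOp n o s = some s' →
      Step D (q, s) none (q', s')

/-- A (finite) run `R(0), …, R(len)` of an `n`-DPDA. -/
structure Run {n : ℕ} {A Γ : Type} (D : DPDA n A Γ) where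
  len : ℕ
  cfg : ℕ → D.Q × St Γ
  lab : ℕ → Option A
  ok : ∀ i < len, Step D (cfg i) (lab i) (cfg (i + 1))

namespace Run

variable {n : ℕ} {A Γ : Type} {D : DPDA n A Γ}

/-- The word read by a run. -/
def word (R : Run D) : List A := (List.range R.len).filterMap R.lab

/-- The subrun `R[i,j]`. -/
def sub (R : Run D) (i j : ℕ) : Run D where
  len := min j R.len - i
  cfg := fun t => R.cfg (i + t)
  lab := fun t => R.lab (i + t)
  ok := fun t ht => R.ok (i + t) (by omega)

/-- The history function of the single step starting at position `j` of the run. -/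
def stepHist (R : Run D) (j : ℕ) : List ℕ → List ℕ :=
  match topLeaf? n (R.cfg j).2 with
  | none => id
  | some γ =>
      match D.δ (R.cfg j).1 γ with
      | Trans.read _ => id
      | Trans.op _ o => histStep n o (R.cfg j).2

/-- `histTo R i j p` : the address in `R(i)` of the origin (history) of the substack
of `R(j)` sitting at address `p` (meaningful for `i ≤ j ≤ R.len`). -/
def histTo (R : Run D) (i : ℕ) : ℕ → List ℕ → List ℕ
  | 0, p => p
  | j + 1, p => if j + 1 ≤ i then p else histTo R i j (stepHist R j p)

/-- A run is `k`-upper when the topmost `k`-stack at its end originates from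
the topmost `k`-stack at its start. -/
def IsUpper (R : Run D) (k : ℕ) : Prop :=
  histTo R 0 R.len (topAddr (R.cfg R.len).2 (n - k)) = topAddr (R.cfg 0).2 (n - k)

/-- A run is a `k`-return when the topmost `(k-1)`-stack at its end originates from the
topmost `(k-1)`-stack of `pop^k` of its starting stack, and no suffix is `(k-1)`-upper. -/
def IsReturn (R : Run D) (k : ℕ) : Prop :=
  (histTo R 0 R.len (topAddr (R.cfg R.len).2 (n - (k - 1))) =
    topAddr (R.cfg 0).2 (n - k) ++
      [sizeAt (R.cfg 0).2 (topAddr (R.cfg 0).2 (n - k)) - 2]) ∧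
  ∀ i < R.len, ¬ (R.sub i R.len).IsUpper (k - 1)

end Run

/-- `R` is the composition `S ∘ T` of the runs `S` and `T`. -/
def IsComp {n : ℕ} {A Γ : Type} {D : DPDA n A Γ} (R S T : Run D) : Prop :=
  S.cfg S.len = T.cfg 0 ∧ R.len = S.len + T.len ∧
  (∀ i ≤ S.len, R.cfg i = S.cfg i) ∧ (∀ i < S.len, R.lab i = S.lab i) ∧
  (∀ i ≤ T.len, R.cfg (S.len + i) = T.cfg i) ∧ (∀ i < T.len, R.lab (S.len + i) = T.lab i)

/-- `Decomp R k r c` : `c 0 < c 1 < … < c r` are the cut points of the (unique)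
decomposition of the `k`-upper run `R` into the maximal number of nonempty
`k`-upper runs. -/
def Decomp {n : ℕ} {A Γ : Type} {D : DPDA n A Γ} (R : Run D) (k r : ℕ) (c : ℕ → ℕ) : Prop :=
  c 0 = 0 ∧ c r = R.len ∧ (∀ j < r, c j < c (j + 1)) ∧ (∀ j ≤ r, c j ≤ R.len) ∧
  (∀ j < r, (R.sub (c j) (c (j + 1))).IsUpper k) ∧
  (∀ j < r, ∀ i, c j < i → i < c (j + 1) → ¬ (R.sub i (c (j + 1))).IsUpper k)

/-- The image under the morphism generated by `φ` of a word. -/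
def phiW {A M : Type} [Monoid M] (φ : A → M) (w : List A) : M := (w.map φ).prod

/-- The two `k`-upper runs `R` and `S` are `(k,φ)`-parallel. -/
def Parallel {n : ℕ} {A Γ M : Type} [Monoid M] {D : DPDA n A Γ}
    (φ : A → M) (R S : Run D) (k : ℕ) : Prop :=
  R.IsUpper k ∧ S.IsUpper k ∧
  topStk n (R.cfg R.len).2 k = topStk n (S.cfg S.len).2 k ∧
  ∃ (r : ℕ) (cR cS : ℕ → ℕ), Decomp R k r cR ∧ Decomp S k r cS ∧
    ∀ j < r,
      phiW φ (R.sub (cR j) (cR (j + 1))).word = phiW φ (S.sub (cS j) (cS (j + 1))).word ∧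
      topStk n (R.cfg (cR j)).2 k = topStk n (S.cfg (cS j)).2 k

/-- An infinite run of an `n`-DPDA. -/
structure InfRun {n : ℕ} {A Γ : Type} (D : DPDA n A Γ) where
  cfg : ℕ → D.Q × St Γ
  lab : ℕ → Option A
  ok : ∀ i, Step D (cfg i) (lab i) (cfg (i + 1))

/-- The finite subrun `R[i,j]` of an infinite run. -/
def InfRun.sub {n : ℕ} {A Γ : Type} {D : DPDA n A Γ} (R : InfRun D) (i j : ℕ) : Run D where
  len := j - i
  cfg := fun t => R.cfg (i + t)
  lab := fun t => R.lab (i + t)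
  ok := fun t _ => R.ok (i + t)

/-- A step label reads nothing, or reads the `star` symbol. -/
def OnlyStar {A : Type} (star : A) (o : Option A) : Prop := o = none ∨ o = some star

/-- Milestone configurations. -/
def Milestone {n : ℕ} {A Γ : Type} {D : DPDA n A Γ} (star : A) (c : D.Q × St Γ) : Prop :=
  ∃ R : InfRun D, R.cfg 0 = c ∧ (∀ i, OnlyStar star (R.lab i)) ∧
    ∃ I : Set ℕ, I.Infinite ∧ 0 ∈ I ∧ ∀ i ∈ I, ∀ j ∈ I, i ≤ j → (R.sub i j).IsUpper 0

/-- The initial order-`n` stack, containing the single symbol `γ`. -/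
def initStack (n : ℕ) {Γ : Type} (γ : Γ) : St Γ :=
  Nat.rec (motive := fun _ => St Γ) (St.leaf γ) (fun _ s => St.node [s]) n

def initCfg {n : ℕ} {A Γ : Type} (D : DPDA n A Γ) : D.Q × St Γ := (D.qI, initStack n D.γI)

/-- The language recognized by an `n`-DPDA. -/
def Lang {n : ℕ} {A Γ : Type} (D : DPDA n A Γ) : Set (List A) :=
  { w | ∃ R : Run D, R.cfg 0 = initCfg D ∧ R.word = w ∧ (R.cfg R.len).1 ∈ D.F }

/-! ### Deterministic order-2 collapsible pushdown automata -/

/-- Stack operations of an order-2 collapsible pushdown automaton. -/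
inductive COp (Γ : Type) where
  | pop1
  | pop2
  | push1 (γ : Γ)
  | push2 (γ : Γ)
  | collapse

/-- An order-2 collapsible stack: a list of 1-stacks (topmost first), each a list of
0-stacks (topmost first) storing a symbol and the collapse link (a natural number). -/
abbrev CStk (Γ : Type) := List (List (Γ × ℕ))

/-- Semantics of the order-2 collapsible stack operations. -/
def capply {Γ : Type} : COp Γ → CStk Γ → Option (CStk Γ)
  | COp.pop1, (_ :: x :: t) :: rest => some ((x :: t) :: rest)
  | COp.pop1, _ => none
  | COp.pop2, _ :: s :: rest => some (s :: rest)
  | COp.pop2, _ => none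
  | COp.push1 γ, (x :: t) :: rest => some (((γ, rest.length + 1) :: x :: t) :: rest)
  | COp.push1 _, _ => none
  | COp.push2 γ, ((x, m) :: t) :: rest => some (((γ, m) :: t) :: ((x, m) :: t) :: rest)
  | COp.push2 _, _ => none
  | COp.collapse, ((x, m) :: t) :: rest =>
      if 1 ≤ m - 1 ∧ m - 1 ≤ rest.length + 1 then
        some ((((x, m) :: t) :: rest).drop (rest.length + 1 - (m - 1)))
      else none
  | COp.collapse, _ => none

/-- The topmost stack symbol of an order-2 collapsible stack. -/
def ctop? {Γ : Type} : CStk Γ → Option Γ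
  | ((γ, _) :: _) :: _ => some γ
  | _ => none

inductive CTrans (A Γ Q : Type) where
  | read (f : A → Q)
  | op (q : Q) (o : COp Γ)

/-- A deterministic order-2 collapsible pushdown automaton. -/
structure CPDA2 (A Γ : Type) where
  Q : Type
  finQ : Finite Q
  qI : Q
  γI : Γ
  F : Set Q
  δ : Q → Γ → CTrans A Γ Q
  read_inj : ∀ q γ f, δ q γ = CTrans.read f → Function.Injective f

inductive CStep {A Γ : Type} (D : CPDA2 A Γ) :
    D.Q × CStk Γ → Option A → D.Q × CStk Γ → Prop where
  | read {q : D.Q} {s : CStk Γ} {γ : Γ} {f : A → D.Q} (a : A) :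
      ctop? s = some γ → D.δ q γ = CTrans.read f → CStep D (q, s) (some a) (f a, s)
  | op {q : D.Q} {s s' : CStk Γ} {γ : Γ} {q' : D.Q} {o : COp Γ} :
      ctop? s = some γ → D.δ q γ = CTrans.op q' o → capply o s = some s' →
      CStep D (q, s) none (q', s')

structure CRun {A Γ : Type} (D : CPDA2 A Γ) where
  len : ℕ
  cfg : ℕ → D.Q × CStk Γ
  lab : ℕ → Option A
  ok : ∀ i < len, CStep D (cfg i) (lab i) (cfg (i + 1))

def CRun.word {A Γ : Type} {D : CPDA2 A Γ} (R : CRun D) : List A :=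
  (List.range R.len).filterMap R.lab

def cinitCfg {A Γ : Type} (D : CPDA2 A Γ) : D.Q × CStk Γ := (D.qI, [[(D.γI, 1)]])

/-- The language recognized by a 2-DCPDA. -/
def CLang {A Γ : Type} (D : CPDA2 A Γ) : Set (List A) :=
  { w | ∃ R : CRun D, R.cfg 0 = cinitCfg D ∧ R.word = w ∧ (R.cfg R.len).1 ∈ D.F }

/-! ### The alphabet `{[, ], ⋆, ♯}`, the function `stars`, and the language `U` -/

inductive Alph : Type where
  | lb    -- the opening bracket [
  | rb    -- the closing bracket ]
  | star  -- ⋆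
  | sharp -- ♯
  deriving DecidableEq

instance instFintypeAlph : Fintype Alph :=
  ⟨{Alph.lb, Alph.rb, Alph.star, Alph.sharp}, fun x => by cases x <;> decide⟩

/-- Processes a word over `{[, ], ⋆}`, keeping the total number of stars read so far and,
for each currently unmatched opening bracket (most recent first), the number of stars
read before it; returns `none` iff some prefix has more `]` than `[`. -/
def starsAux : List Alph → ℕ → List ℕ → Option (List ℕ)
  | [], _, st => some st
  | Alph.star :: w, cnt, st => starsAux w (cnt + 1) st
  | Alph.lb :: w, cnt, st => starsAux w cnt (cnt :: st)
  | Alph.rb :: w, cnt, st =>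
      match st with
      | [] => none
      | _ :: st' => starsAux w cnt st'
  | Alph.sharp :: _, _, _ => none

/-- `stars w` : `0` if some prefix of `w` has more closing than opening brackets, or if
`w` has equally many opening and closing brackets; otherwise the number of `⋆`s in `w`
before the last opening bracket of `w` not matched by a closing bracket. -/
def stars (w : List Alph) : ℕ :=
  match starsAux w 0 [] with
  | some (c :: _) => c
  | _ => 0

/-- The language `U = { w ♯^(stars(w)+1) | w ∈ {[, ], ⋆}* }`. -/
def U : Set (List Alph) :=
  { u | ∃ w : List Alph, Alph.sharp ∉ w ∧ u = w ++ List.replicate (stars w + 1) Alph.sharp }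

/-! ### Tree-generating pushdown systems -/

inductive TTrans (A Γ Q : Type) where
  | branch (a : A) (next : ℕ → Q)
  | op (q : Q) (o : Op Γ)

/-- A deterministic tree-generating order-`n` pushdown system (without collapse)
over the ranked alphabet `(A, rank)`. -/
structure TreePDA (n : ℕ) (A Γ : Type) (rank : A → ℕ) where
  Q : Type
  finQ : Finite Q
  qI : Q
  γI : Γ
  δ : Q → Γ → TTrans A Γ Q
  branch_inj : ∀ q γ a next, δ q γ = TTrans.branch a next →
      ∀ i j, i < rank a → j < rank a → next i = next j → i = j

/-- One step of a tree-generating `n`-PDS; the label records the child chosen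
at a branch step (if any). -/
inductive TStep {n : ℕ} {A Γ : Type} {rank : A → ℕ} (D : TreePDA n A Γ rank) :
    D.Q × St Γ → Option ℕ → D.Q × St Γ → Prop where
  | branch {q : D.Q} {s : St Γ} {γ : Γ} {a : A} {next : ℕ → D.Q} {i : ℕ} :
      IsValid n s → topLeaf? n s = some γ → D.δ q γ = TTrans.branch a next → i < rank a →
      TStep D (q, s) (some i) (next i, s)
  | op {q : D.Q} {s s' : St Γ} {γ : Γ} {q' : D.Q} {o : Op Γ} :
      IsValid n s → topLeaf? n s = some γ → D.δ q γ = TTrans.op q' o →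
      applyOp n o s = some s' →
      TStep D (q, s) none (q', s')

def TReach {n : ℕ} {A Γ : Type} {rank : A → ℕ} (D : TreePDA n A Γ rank) :
    D.Q × St Γ → D.Q × St Γ → Prop :=
  Relation.ReflTransGen (fun c c' => ∃ o, TStep D c o c')

def TOpReach {n : ℕ} {A Γ : Type} {rank : A → ℕ} (D : TreePDA n A Γ rank) :
    D.Q × St Γ → D.Q × St Γ → Prop :=
  Relation.ReflTransGen (fun c c' => TStep D c none c')

/-- `c` is a configuration at which a `branch(a,…)` transition applies. -/
def TIsBr {n : ℕ} {A Γ : Type} {rank : A → ℕ} (D : TreePDA n A Γ rank)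
    (c : D.Q × St Γ) (a : A) : Prop :=
  ∃ γ next, IsValid n c.2 ∧ topLeaf? n c.2 = some γ ∧ D.δ c.1 γ = TTrans.branch a next

/-- `TFollow D c p c'` : starting from the branch configuration `c` and following
the child choices `p` (each branch step being followed by op steps up to the next
branch configuration) one arrives at the branch configuration `c'`. -/
inductive TFollow {n : ℕ} {A Γ : Type} {rank : A → ℕ} (D : TreePDA n A Γ rank) :
    D.Q × St Γ → List ℕ → D.Q × St Γ → Prop where
  | nil (c : D.Q × St Γ) : TFollow D c [] c
  | cons {c c₁ c₂ c₃ : D.Q × St Γ} {i : ℕ} {p : List ℕ} :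
      TStep D c (some i) c₁ → TOpReach D c₁ c₂ → (∃ a, TIsBr D c₂ a) →
      TFollow D c₂ p c₃ → TFollow D c (i :: p) c₃

def tinitCfg {n : ℕ} {A Γ : Type} {rank : A → ℕ} (D : TreePDA n A Γ rank) : D.Q × St Γ :=
  (D.qI, initStack n D.γI)

/-- `D` generates the ranked tree whose labelling function is `t`
(`t p = some a` iff the node at position `p` exists and is labelled `a`). -/
def TGenerates {n : ℕ} {A Γ : Type} {rank : A → ℕ} (D : TreePDA n A Γ rank)
    (t : List ℕ → Option A) : Prop :=
  (∀ c, TReach D (tinitCfg D) c → ∃ c' a, TReach D c c' ∧ TIsBr D c' a) ∧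
  ∃ c₀, TOpReach D (tinitCfg D) c₀ ∧ (∃ a, TIsBr D c₀ a) ∧
    ∀ p a, t p = some a ↔ ∃ c, TFollow D c₀ p c ∧ TIsBr D c a

/-! ### Tree-generating order-2 collapsible pushdown systems -/

inductive CTTrans (A Γ Q : Type) where
  | branch (a : A) (next : ℕ → Q)
  | op (q : Q) (o : COp Γ)

structure CTreePDA (A Γ : Type) (rank : A → ℕ) where
  Q : Type
  finQ : Finite Q
  qI : Q
  γI : Γ
  δ : Q → Γ → CTTrans A Γ Q
  branch_inj : ∀ q γ a next, δ q γ = CTTrans.branch a next →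
      ∀ i j, i < rank a → j < rank a → next i = next j → i = j

inductive CTStep {A Γ : Type} {rank : A → ℕ} (D : CTreePDA A Γ rank) :
    D.Q × CStk Γ → Option ℕ → D.Q × CStk Γ → Prop where
  | branch {q : D.Q} {s : CStk Γ} {γ : Γ} {a : A} {next : ℕ → D.Q} {i : ℕ} :
      ctop? s = some γ → D.δ q γ = CTTrans.branch a next → i < rank a →
      CTStep D (q, s) (some i) (next i, s)
  | op {q : D.Q} {s s' : CStk Γ} {γ : Γ} {q' : D.Q} {o : COp Γ} :
      ctop? s = some γ → D.δ q γ = CTTrans.op q' o → capply o s = some s' →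
      CTStep D (q, s) none (q', s')

def CTReach {A Γ : Type} {rank : A → ℕ} (D : CTreePDA A Γ rank) :
    D.Q × CStk Γ → D.Q × CStk Γ → Prop :=
  Relation.ReflTransGen (fun c c' => ∃ o, CTStep D c o c')

def CTOpReach {A Γ : Type} {rank : A → ℕ} (D : CTreePDA A Γ rank) :
    D.Q × CStk Γ → D.Q × CStk Γ → Prop :=
  Relation.ReflTransGen (fun c c' => CTStep D c none c')

def CTIsBr {A Γ : Type} {rank : A → ℕ} (D : CTreePDA A Γ rank)
    (c : D.Q × CStk Γ) (a : A) : Prop :=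
  ∃ γ next, ctop? c.2 = some γ ∧ D.δ c.1 γ = CTTrans.branch a next

inductive CTFollow {A Γ : Type} {rank : A → ℕ} (D : CTreePDA A Γ rank) :
    D.Q × CStk Γ → List ℕ → D.Q × CStk Γ → Prop where
  | nil (c : D.Q × CStk Γ) : CTFollow D c [] c
  | cons {c c₁ c₂ c₃ : D.Q × CStk Γ} {i : ℕ} {p : List ℕ} :
      CTStep D c (some i) c₁ → CTOpReach D c₁ c₂ → (∃ a, CTIsBr D c₂ a) →
      CTFollow D c₂ p c₃ → CTFollow D c (i :: p) c₃

def ctinitCfg {A Γ : Type} {rank : A → ℕ} (D : CTreePDA A Γ rank) : D.Q × CStk Γ :=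
  (D.qI, [[(D.γI, 1)]])

/-- The order-2 collapsible pushdown system `D` generates the ranked tree whose
labelling function is `t`. -/
def CTGenerates {A Γ : Type} {rank : A → ℕ} (D : CTreePDA A Γ rank)
    (t : List ℕ → Option A) : Prop :=
  (∀ c, CTReach D (ctinitCfg D) c → ∃ c' a, CTReach D c c' ∧ CTIsBr D c' a) ∧
  ∃ c₀, CTOpReach D (ctinitCfg D) c₀ ∧ (∃ a, CTIsBr D c₀ a) ∧
    ∀ p a, t p = some a ↔ ∃ c, CTFollow D c₀ p c ∧ CTIsBr D c a

/-! ### Auxiliary lemmas for Statement 6 -/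

section Aux6

variable {Γ : Type}

lemma sub?_nil (s : St Γ) : sub? s [] = some s := by cases s <;> rfl

lemma topAddr_zero (s : St Γ) : topAddr s 0 = [] := by cases s <;> rfl

lemma modAt_nil (s : St Γ) (f : St Γ → Option (St Γ)) : modAt s [] f = f s := by
  cases s <;> rfl

lemma sub?_leaf_cons (γ : Γ) (i : ℕ) (w : List ℕ) : sub? (St.leaf γ) (i :: w) = none := rfl

lemma sub?_node_cons {l : List (St Γ)} {i : ℕ} {u : St Γ} (h : l[i]? = some u) (w : List ℕ) :
    sub? (St.node l) (i :: w) = sub? u w := by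
  simp [sub?, h]

lemma sub?_node_cons_none {l : List (St Γ)} {i : ℕ} (h : l[i]? = none) (w : List ℕ) :
    sub? (St.node l) (i :: w) = none := by
  simp [sub?, h]

lemma length_topAddr_le (d : ℕ) (s : St Γ) : (topAddr s d).length ≤ d := by
  induction d generalizing s with
  | zero => simp [topAddr]
  | succ d ih =>
    cases s with
    | leaf γ => simp [topAddr]
    | node l => simpa [topAddr, Nat.succ_le_succ_iff] using ih _

lemma valid_node_concat {c : ℕ} {l : List (St Γ)} (h : IsValid c (St.node l)) :
    ∃ c' l₀ x, c = c' + 1 ∧ l = l₀ ++ [x] ∧ IsValid c' x ∧ ∀ t ∈ l, IsValid c' t := by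
  cases c with
  | zero => exact absurd h (by simp [IsValid])
  | succ c' =>
    obtain ⟨hne, hall⟩ := h
    rcases List.eq_nil_or_concat l with rfl | ⟨l₀, x, rfl⟩
    · exact absurd rfl hne
    · exact ⟨c', l₀, x, rfl, by simp, hall x (by simp), hall⟩

lemma getLastD_concat' (l₀ : List (St Γ)) (x d : St Γ) : (l₀ ++ [x]).getLastD d = x := by
  simpa using List.getLastD_concat d x l₀

lemma getElem?_last_concat (l₀ : List (St Γ)) (x : St Γ) :
    (l₀ ++ [x])[(l₀ ++ [x]).length - 1]? = some x := by
  simpa using List.getElem?_concat_length l₀ x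

lemma length_topAddr {c : ℕ} {s : St Γ} (h : IsValid c s) {d : ℕ} (hd : d ≤ c) :
    (topAddr s d).length = d := by
  induction d generalizing s c with
  | zero => simp [topAddr]
  | succ d ih =>
    cases s with
    | leaf γ =>
      cases c with
      | zero => omega
      | succ c' => exact absurd h (by simp [IsValid])
    | node l =>
      obtain ⟨c', l₀, x, rfl, rfl, hx, -⟩ := valid_node_concat h
      simp only [topAddr, getLastD_concat', List.length_cons]
      rw [ih hx (by omega)]

lemma sub?_topAddr {c : ℕ} {s : St Γ} (h : IsValid c s) {d : ℕ} (hd : d ≤ c) :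
    ∃ t, sub? s (topAddr s d) = some t ∧ IsValid (c - d) t := by
  induction d generalizing s c with
  | zero => exact ⟨s, by rw [topAddr_zero, sub?_nil], by simpa using h⟩
  | succ d ih =>
    cases s with
    | leaf γ =>
      cases c with
      | zero => omega
      | succ c' => exact absurd h (by simp [IsValid])
    | node l =>
      obtain ⟨c', l₀, x, rfl, rfl, hx, -⟩ := valid_node_concat h
      obtain ⟨t, ht, htv⟩ := ih hx (by omega)
      refine ⟨t, ?_, by simpa using htv⟩
      rw [topAddr, getLastD_concat', sub?_node_cons (getElem?_last_concat l₀ x) _, ht]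

lemma sizeAt_node {s : St Γ} {p : List ℕ} {l : List (St Γ)} (h : sub? s p = some (St.node l)) :
    sizeAt s p = l.length := by
  simp [sizeAt, h]

lemma topAddr_succ {c : ℕ} {s : St Γ} (h : IsValid c s) {d : ℕ} (hd : d + 1 ≤ c) :
    topAddr s (d + 1) = topAddr s d ++ [sizeAt s (topAddr s d) - 1] := by
  induction d generalizing s c with
  | zero =>
    cases s with
    | leaf γ =>
      cases c with
      | zero => omega
      | succ c' => exact absurd h (by simp [IsValid])
    | node l =>
      have : sizeAt (St.node l) [] = l.length := sizeAt_node rfl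
      simp [topAddr, this]
  | succ d ih =>
    cases s with
    | leaf γ =>
      cases c with
      | zero => omega
      | succ c' => exact absurd h (by simp [IsValid])
    | node l =>
      obtain ⟨c', l₀, x, rfl, rfl, hx, -⟩ := valid_node_concat h
      have hsz : ∀ w : List ℕ,
          sizeAt (St.node (l₀ ++ [x])) (((l₀ ++ [x]).length - 1) :: w) = sizeAt x w := by
        intro w
        rw [sizeAt, sizeAt, sub?_node_cons (getElem?_last_concat l₀ x) w]
      simp only [topAddr, getLastD_concat']
      rw [ih hx (by omega), hsz]
      simp

lemma topAddr_take {d d' : ℕ} (hd : d ≤ d') (s : St Γ) :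
    (topAddr s d').take d = topAddr s d := by
  induction d generalizing s d' with
  | zero => simp [topAddr]
  | succ d ih =>
    cases s with
    | leaf γ =>
      cases d' with
      | zero => omega
      | succ d'' => simp [topAddr]
    | node l =>
      cases d' with
      | zero => omega
      | succ d'' =>
        rw [topAddr, topAddr, List.take_succ_cons, ih (by omega)]

lemma sub?_append (s : St Γ) (p w : List ℕ) :
    sub? s (p ++ w) = (sub? s p).bind fun t => sub? t w := by
  induction p generalizing s with
  | nil => simp [sub?_nil]
  | cons i p ih =>
    cases s with
    | leaf γ => simp [sub?_leaf_cons]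
    | node l =>
      cases h : l[i]? with
      | none => simp [sub?_node_cons_none h]
      | some u => simp [sub?_node_cons h, ih]

lemma modAt_spec {s s' : St Γ} {q : List ℕ} {f : St Γ → Option (St Γ)}
    (h : modAt s q f = some s') :
    ∃ t t', sub? s q = some t ∧ f t = some t' ∧ sub? s' q = some t' ∧
      ∀ p, ¬ q <+: p → (sub? s' p = none ↔ sub? s p = none) := by
  induction q generalizing s s' with
  | nil =>
    rw [modAt_nil] at h
    refine ⟨s, s', sub?_nil s, h, sub?_nil s', ?_⟩
    intro p hp
    exact absurd List.nil_prefix hp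
  | cons i q ih =>
    cases s with
    | leaf γ => simp [modAt] at h
    | node l =>
      rw [modAt] at h
      split at h
      · exact absurd h (by simp)
      · rename_i t₀ hl
        split at h
        · exact absurd h (by simp)
        · rename_i t₁ hm
          simp only [Option.some_inj] at h
          subst h
          obtain ⟨t, t', h1, h2, h3, h4⟩ := ih hm
          have hilen : i < l.length := by
            rcases List.getElem?_eq_some_iff.1 hl with ⟨hi, -⟩; exact hi
          have hset : (l.set i t₁)[i]? = some t₁ := by
            simp [List.getElem?_set_self (by simpa using hilen)]
          refine ⟨t, t', ?_, h2, ?_, ?_⟩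
          · rw [sub?_node_cons hl, h1]
          · rw [sub?_node_cons hset, h3]
          · intro p hp
            cases p with
            | nil => simp [sub?_nil]
            | cons j p₀ =>
              by_cases hji : j = i
              · subst hji
                have hq : ¬ q <+: p₀ := fun hpre => hp (by simp [hpre])
                rw [sub?_node_cons hl, sub?_node_cons hset]
                exact h4 p₀ hq
              · have : (l.set i t₁)[j]? = l[j]? := List.getElem?_set_ne (by omega)
                cases hj : l[j]? with
                | none =>
                  rw [sub?_node_cons_none hj, sub?_node_cons_none (this.trans hj)]
                | some u =>
                  rw [sub?_node_cons hj, sub?_node_cons (this.trans hj)]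

lemma modAt_valid {c : ℕ} {s s' : St Γ} {q : List ℕ} {f : St Γ → Option (St Γ)}
    (hv : IsValid c s) (hq : q.length ≤ c)
    (hf : ∀ t t', f t = some t' → IsValid (c - q.length) t → IsValid (c - q.length) t')
    (h : modAt s q f = some s') : IsValid c s' := by
  induction q generalizing s s' c with
  | nil =>
    rw [modAt_nil] at h
    simpa using hf s s' h (by simpa using hv)
  | cons i q ih =>
    cases s with
    | leaf γ => simp [modAt] at h
    | node l =>
      rw [modAt] at h
      split at h
      · exact absurd h (by simp)
      · rename_i t₀ hl
        split at h
        · exact absurd h (by simp)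
        · rename_i t₁ hm
          simp only [Option.some_inj] at h
          subst h
          cases c with
          | zero => exact absurd hv (by simp [IsValid])
          | succ c' =>
            obtain ⟨hne, hall⟩ := hv
            have ht₀ : IsValid c' t₀ := hall t₀ (by
              rcases List.getElem?_eq_some_iff.1 hl with ⟨hi, he⟩
              exact he ▸ l.getElem_mem hi)
            have ht₁ : IsValid c' t₁ := by
              refine ih ht₀ (by simpa using hq) ?_ hm
              intro t t' hft htv
              have := hf t t' hft (by simpa using htv)
              simpa using this
            constructor
            · simp [List.set]
              intro hnil
              exact hne (by simpa using congrArg List.length hnil)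
            · intro t htmem
              rcases List.mem_or_eq_of_mem_set htmem with hmem | rfl
              · exact hall t hmem
              · exact ht₁

lemma popStk_valid {c : ℕ} {t t' : St Γ} (h : popStk t = some t') (hv : IsValid c t) :
    IsValid c t' := by
  cases t with
  | leaf γ => simp [popStk] at h
  | node l =>
    rw [popStk] at h
    split at h
    · rename_i h2
      simp only [Option.some_inj] at h
      subst h
      obtain ⟨c', l₀, x, rfl, rfl, hx, hall⟩ := valid_node_concat hv
      constructor
      · have : (l₀ ++ [x]).dropLast = l₀ := by simp
        rw [this]
        intro hnil
        subst hnil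
        simp at h2
      · intro t htmem
        exact hall t ((List.dropLast_sublist _).mem htmem)
    · simp at h

lemma leafrep_valid {e : ℕ} {γ : Γ} {u u' : St Γ}
    (hu : (match u with
           | St.leaf _ => some (St.leaf γ)
           | St.node _ => none) = some u') (huv : IsValid e u) : IsValid e u' := by
  cases u with
  | node _ => simp at hu
  | leaf δ =>
    simp only [Option.some_inj] at hu
    subst hu
    cases e with
    | zero => trivial
    | succ _ => exact absurd huv (by simp [IsValid])

lemma dupTop_valid {r : ℕ} {γ : Γ} {t t' : St Γ} (h : dupTop r γ t = some t')
    (hv : IsValid r t) : IsValid r t' := by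
  cases t with
  | leaf δ => simp [dupTop] at h
  | node l =>
    rw [dupTop] at h
    split at h
    · exact absurd h (by simp)
    · rename_i tl hlast
      split at h
      · exact absurd h (by simp)
      · rename_i tl' hmod
        simp only [Option.some_inj] at h
        subst h
        obtain ⟨c', l₀, x, rfl, rfl, hx, hall⟩ := valid_node_concat hv
        have htl : IsValid c' tl := hall tl (by
          have := List.getLast?_eq_getElem? (l := l₀ ++ [x])
          rw [hlast] at this
          rcases List.getElem?_eq_some_iff.1 this.symm with ⟨hi, he⟩
          exact he ▸ (l₀ ++ [x]).getElem_mem hi)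
        have htl' : IsValid c' tl' := by
          refine modAt_valid htl (le_trans (length_topAddr_le _ _) (by omega)) ?_ hmod
          exact fun u u' hu huv => leafrep_valid hu huv
        exact ⟨by simp, fun t htmem => by
          rcases List.mem_append.1 htmem with hmem | hmem
          · exact hall t hmem
          · simp only [List.mem_singleton] at hmem
            exact hmem ▸ htl'⟩

lemma applyOp_valid {n : ℕ} {s s' : St Γ} {o : Op Γ} (hv : IsValid n s)
    (h : applyOp n o s = some s') : IsValid n s' := by
  cases o with
  | pop r =>
    rw [applyOp] at h
    split at h
    · rename_i hr
      rw [popOp] at h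
      refine modAt_valid hv (le_trans (length_topAddr_le _ _) (by omega)) ?_ h
      intro t t' hft htv
      exact popStk_valid hft htv
    · simp at h
  | push r γ =>
    rw [applyOp] at h
    split at h
    · rename_i hr
      rw [pushOp] at h
      have hta : (topAddr s (n - r)).length = n - r := length_topAddr hv (by omega)
      refine modAt_valid hv (le_trans (length_topAddr_le _ _) (by omega)) ?_ h
      intro t t' hft htv
      rw [hta] at htv ⊢
      have hnr : n - (n - r) = r := by omega
      rw [hnr] at htv ⊢
      exact dupTop_valid hft htv
    · simp at h

/-! Histories of single operations. -/

lemma length_histStep {n : ℕ} (o : Op Γ) (s : St Γ) (p : List ℕ) :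
    (histStep n o s p).length = p.length := by
  cases o with
  | pop r => rfl
  | push r γ =>
    rw [histStep]
    split
    · simp
    · rfl

lemma take_histStep {n : ℕ} (o : Op Γ) (s : St Γ) (p : List ℕ) (t : ℕ) :
    (histStep n o s p).take t = histStep n o s (p.take t) := by
  cases o with
  | pop r => rfl
  | push r γ =>
    simp only [histStep]
    rcases le_or_gt t (n - r) with ht | ht
    · have hlen : ∀ l : List ℕ, (l.take t).length ≤ n - r :=
        fun l => le_trans (List.length_take_le _ _) ht
      have hL : (if p.take (n - r + 1) = topAddr s (n - r) ++ [sizeAt s (topAddr s (n - r))]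
          then p.set (n - r) (sizeAt s (topAddr s (n - r)) - 1) else p).take t = p.take t := by
        split
        · rw [List.take_set, List.set_eq_of_length_le (hlen p)]
        · rfl
      rw [hL]
      split
      · rw [List.set_eq_of_length_le (hlen p)]
      · rfl
    · have htake : (p.take t).take (n - r + 1) = p.take (n - r + 1) := by
        rw [List.take_take, min_eq_left (by omega)]
      rw [htake]
      split
      · rw [List.take_set]
      · rfl

lemma histStep_mono {n : ℕ} (o : Op Γ) (s : St Γ) (u : List ℕ) {j j' : ℕ} (hj : j ≤ j') :
    ∃ v a a', histStep n o s (u ++ [j]) = v ++ [a] ∧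
      histStep n o s (u ++ [j']) = v ++ [a'] ∧ a ≤ a' := by
  cases o with
  | pop r => exact ⟨u, j, j', rfl, rfl, hj⟩
  | push r γ =>
    simp only [histStep]
    set m := n - r with hm
    set ta := topAddr s m with hta
    set sz := sizeAt s ta with hsz
    rcases Nat.lt_trichotomy m u.length with hlt | heq | hgt
    · have htk : ∀ x : ℕ, (u ++ [x]).take (m + 1) = u.take (m + 1) := by
        intro x
        rw [List.take_append]
        have h0 : m + 1 - u.length = 0 := by omega
        rw [h0]
        simp
      by_cases hC : u.take (m + 1) = ta ++ [sz]
      · refine ⟨u.set m (sz - 1), j, j', ?_, ?_, hj⟩ <;>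
          rw [htk, if_pos hC, List.set_append_left _ _ hlt]
      · refine ⟨u, j, j', ?_, ?_, hj⟩ <;> rw [htk, if_neg hC]
    · have htk : ∀ x : ℕ, (u ++ [x]).take (m + 1) = u ++ [x] := by
        intro x
        rw [List.take_of_length_le (by simp [heq.symm])]
      have hiff : ∀ x : ℕ, (u ++ [x] = ta ++ [sz]) ↔ (u = ta ∧ x = sz) := by
        intro x
        constructor
        · intro hc
          obtain ⟨h1, h2⟩ := List.append_inj' hc rfl
          exact ⟨h1, by simpa using h2⟩
        · rintro ⟨rfl, rfl⟩; rfl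
      have hset : ∀ x : ℕ, (u ++ [x]).set m (sz - 1) = u ++ [sz - 1] := by
        intro x
        rw [List.set_append_right _ _ (le_of_eq heq.symm)]
        have h0 : m - u.length = 0 := by omega
        rw [h0]
        rfl
      by_cases hu : u = ta
      · refine ⟨u, if j = sz then sz - 1 else j, if j' = sz then sz - 1 else j', ?_, ?_, ?_⟩
        · rw [htk]
          by_cases hx : j = sz
          · rw [if_pos (by rw [hiff]; exact ⟨hu, hx⟩), hset, if_pos hx]
          · rw [if_neg (by rw [hiff]; exact fun hh => hx hh.2), if_neg hx]
        · rw [htk]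
          by_cases hx : j' = sz
          · rw [if_pos (by rw [hiff]; exact ⟨hu, hx⟩), hset, if_pos hx]
          · rw [if_neg (by rw [hiff]; exact fun hh => hx hh.2), if_neg hx]
        · split <;> split <;> omega
      · refine ⟨u, j, j', ?_, ?_, hj⟩ <;>
          rw [htk, if_neg (fun hh => hu ((hiff _).1 hh).1)]
    · have hsetid : ∀ x : ℕ,
          (if (u ++ [x]).take (m + 1) = ta ++ [sz] then (u ++ [x]).set m (sz - 1)
            else u ++ [x]) = u ++ [x] := by
        intro x
        split
        · exact List.set_eq_of_length_le (by simp; omega)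
        · rfl
      exact ⟨u, j, j', hsetid j, hsetid j', hj⟩

lemma leafmod_shape {γ : Γ} {t t' : St Γ} {q : List ℕ}
    (h : modAt t q (fun u =>
      match u with
      | St.leaf _ => some (St.leaf γ)
      | St.node _ => none) = some t') :
    ∀ w, (sub? t' w = none ↔ sub? t w = none) := by
  obtain ⟨u, u', h1, h2, h3, h4⟩ := modAt_spec h
  intro w
  by_cases hw : q <+: w
  · obtain ⟨w₀, rfl⟩ := hw
    cases u with
    | node _ => simp at h2
    | leaf δ =>
      simp only [Option.some_inj] at h2
      subst h2
      rw [sub?_append, sub?_append, h1, h3]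
      cases w₀ with
      | nil => simp [sub?_nil]
      | cons i w₁ => simp [sub?_leaf_cons]
  · exact h4 w hw

lemma applyOp_hist_sub {n : ℕ} {s s' : St Γ} {o : Op Γ} (hv : IsValid n s)
    (h : applyOp n o s = some s') {p : List ℕ} (hp : sub? s' p ≠ none) :
    sub? s (histStep n o s p) ≠ none := by
  cases o with
  | pop r =>
    rw [applyOp] at h
    split at h
    · rw [popOp] at h
      obtain ⟨t, t', h1, h2, h3, h4⟩ := modAt_spec h
      show sub? s p ≠ none
      by_cases hpre : topAddr s (n - r) <+: p
      · obtain ⟨w, rfl⟩ := hpre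
        rw [sub?_append, h3] at hp
        rw [sub?_append, h1]
        cases t with
        | leaf γ => simp [popStk] at h2
        | node l =>
          rw [popStk] at h2
          split at h2
          · simp only [Option.some_inj] at h2
            subst h2
            cases w with
            | nil => simp [sub?_nil]
            | cons i w₀ =>
              simp only [Option.bind_some] at hp ⊢
              cases hd : l.dropLast[i]? with
              | none => rw [sub?_node_cons_none hd] at hp; exact absurd rfl hp
              | some u =>
                rw [sub?_node_cons hd] at hp
                have hli : l[i]? = some u := by
                  rw [List.getElem?_dropLast] at hd
                  split at hd
                  · exact hd
                  · simp at hd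
                rw [sub?_node_cons hli]
                exact hp
          · simp at h2
      · exact fun hc => hp ((h4 p hpre).2 hc)
    · simp at h
  | push r γ =>
    rw [applyOp] at h
    split at h
    · rename_i hr
      rw [pushOp] at h
      obtain ⟨t, t', h1, h2, h3, h4⟩ := modAt_spec h
      have hta : (topAddr s (n - r)).length = n - r := length_topAddr hv (by omega)
      cases t with
      | leaf δ => simp [dupTop] at h2
      | node l =>
        rw [dupTop] at h2
        split at h2
        · exact absurd h2 (by simp)
        · rename_i tl hlast
          split at h2
          · exact absurd h2 (by simp)
          · rename_i tl' hmod
            simp only [Option.some_inj] at h2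
            subst h2
            have hsz : sizeAt s (topAddr s (n - r)) = l.length := sizeAt_node h1
            simp only [histStep, hsz]
            have hlnil : l ≠ [] := by
              intro hnil
              subst hnil
              simp at hlast
            have hgl : l[l.length - 1]? = some tl := by
              rw [← List.getLast?_eq_getElem?, hlast]
            by_cases hC : p.take (n - r + 1) = topAddr s (n - r) ++ [l.length]
            · rw [if_pos hC]
              have hpre : topAddr s (n - r) ++ [l.length] <+: p := hC ▸ List.take_prefix _ _
              obtain ⟨w₀, hw⟩ := hpre
              rw [List.append_assoc] at hw
              subst hw
              have hset : (topAddr s (n - r) ++ ([l.length] ++ w₀)).set (n - r) (l.length - 1) =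
                  topAddr s (n - r) ++ ([l.length - 1] ++ w₀) := by
                rw [List.set_append_right _ _ hta.le]
                have h0 : n - r - (topAddr s (n - r)).length = 0 := by omega
                rw [h0]
                rfl
              rw [hset, sub?_append, h1]
              rw [sub?_append, h3] at hp
              simp only [Option.bind_some, List.singleton_append] at hp ⊢
              rw [sub?_node_cons (List.getElem?_concat_length (l := l) (a := tl'))] at hp
              rw [sub?_node_cons hgl]
              intro hc
              exact hp ((leafmod_shape hmod w₀).2 hc)
            · rw [if_neg hC]
              by_cases hpre : topAddr s (n - r) <+: p
              · obtain ⟨w, rfl⟩ := hpre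
                rw [sub?_append, h3] at hp
                rw [sub?_append, h1]
                cases w with
                | nil => simp [sub?_nil]
                | cons i w₀ =>
                  simp only [Option.bind_some] at hp ⊢
                  rcases Nat.lt_trichotomy i l.length with hi | hi | hi
                  · have hgi : (l ++ [tl'])[i]? = l[i]? := List.getElem?_append_left hi
                    cases hli : l[i]? with
                    | none => rw [sub?_node_cons_none (hgi.trans hli)] at hp; exact absurd rfl hp
                    | some u =>
                      rw [sub?_node_cons (hgi.trans hli)] at hp
                      rw [sub?_node_cons hli]
                      exact hp
                  · exfalso
                    apply hC
                    subst hi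
                    rw [List.take_append, hta,
                      List.take_of_length_le (by omega : (topAddr s (n - r)).length ≤ n - r + 1)]
                    have h1' : n - r + 1 - (n - r) = 1 := by omega
                    rw [h1']
                    rfl
                  · have hgi : (l ++ [tl'])[i]? = none :=
                      List.getElem?_eq_none (by simp; omega)
                    rw [sub?_node_cons_none hgi] at hp
                    exact absurd rfl hp
              · exact fun hc => hp ((h4 p hpre).2 hc)
    · simp at h

end Aux6

section Aux6Run

variable {n : ℕ} {A Γ : Type} {D : DPDA n A Γ}

lemma Step_valid_src {c c' : D.Q × St Γ} {o : Option A} (h : Step D c o c') :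
    IsValid n c.2 := by
  cases h with
  | read a hval htop hδ => exact hval
  | op hval htop hδ happ => exact hval

lemma Step_valid_tgt {c c' : D.Q × St Γ} {o : Option A} (h : Step D c o c') :
    IsValid n c'.2 := by
  cases h with
  | read a hval htop hδ => exact hval
  | op hval htop hδ happ => exact applyOp_valid hval happ

lemma Run.validAt (X : Run D) (hlen : 1 ≤ X.len) {i : ℕ} (hi : i ≤ X.len) :
    IsValid n (X.cfg i).2 := by
  by_cases hlt : i < X.len
  · exact Step_valid_src (X.ok i hlt)
  · have hi' : i = X.len := by omega
    subst hi'
    have := Step_valid_tgt (X.ok (X.len - 1) (by omega))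
    have he : X.len - 1 + 1 = X.len := by omega
    rwa [he] at this

lemma stepHist_cases (X : Run D) (j : ℕ) :
    X.stepHist j = id ∨ ∃ o : Op Γ, X.stepHist j = histStep n o (X.cfg j).2 := by
  rw [Run.stepHist]
  split
  · exact Or.inl rfl
  · split
    · exact Or.inl rfl
    · exact Or.inr ⟨_, rfl⟩

lemma length_stepHist (X : Run D) (j : ℕ) (p : List ℕ) :
    (X.stepHist j p).length = p.length := by
  rcases stepHist_cases X j with h | ⟨o, h⟩
  · rw [h]; rfl
  · rw [h]; exact length_histStep o _ p

lemma take_stepHist (X : Run D) (j : ℕ) (p : List ℕ) (t : ℕ) :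
    (X.stepHist j p).take t = X.stepHist j (p.take t) := by
  rcases stepHist_cases X j with h | ⟨o, h⟩
  · rw [h]; rfl
  · rw [h]; exact take_histStep o _ p t

lemma stepHist_mono (X : Run D) (j : ℕ) (u : List ℕ) {a b : ℕ} (hab : a ≤ b) :
    ∃ v a' b', X.stepHist j (u ++ [a]) = v ++ [a'] ∧
      X.stepHist j (u ++ [b]) = v ++ [b'] ∧ a' ≤ b' := by
  rcases stepHist_cases X j with h | ⟨o, h⟩
  · exact ⟨u, a, b, by rw [h]; rfl, by rw [h]; rfl, hab⟩
  · rw [h]; exact histStep_mono o _ u hab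

lemma histTo_zero (X : Run D) (i : ℕ) (p : List ℕ) : X.histTo i 0 p = p := rfl

lemma histTo_succ (X : Run D) (i j : ℕ) (p : List ℕ) :
    X.histTo i (j + 1) p = if j + 1 ≤ i then p else X.histTo i j (X.stepHist j p) := rfl

lemma histTo_self (X : Run D) {i j : ℕ} (h : j ≤ i) (p : List ℕ) : X.histTo i j p = p := by
  cases j with
  | zero => rfl
  | succ j => rw [histTo_succ, if_pos h]

lemma length_histTo (X : Run D) (i j : ℕ) (p : List ℕ) :
    (X.histTo i j p).length = p.length := by
  induction j generalizing p with
  | zero => rfl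
  | succ j ih =>
    rw [histTo_succ]
    split
    · rfl
    · rw [ih, length_stepHist]

lemma take_histTo (X : Run D) (i j : ℕ) (p : List ℕ) (t : ℕ) :
    (X.histTo i j p).take t = X.histTo i j (p.take t) := by
  induction j generalizing p with
  | zero => rfl
  | succ j ih =>
    rw [histTo_succ, histTo_succ]
    split
    · rfl
    · rw [ih, take_stepHist]

lemma histTo_mono (X : Run D) (i j : ℕ) (u : List ℕ) {a b : ℕ} (hab : a ≤ b) :
    ∃ v a' b', X.histTo i j (u ++ [a]) = v ++ [a'] ∧
      X.histTo i j (u ++ [b]) = v ++ [b'] ∧ a' ≤ b' := by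
  induction j generalizing u a b with
  | zero => exact ⟨u, a, b, rfl, rfl, hab⟩
  | succ j ih =>
    rw [histTo_succ, histTo_succ]
    split
    · exact ⟨u, a, b, rfl, rfl, hab⟩
    · obtain ⟨v₁, a₁, b₁, h1, h2, h3⟩ := stepHist_mono X j u hab
      obtain ⟨v, a', b', g1, g2, g3⟩ := ih v₁ h3
      exact ⟨v, a', b', by rw [h1, g1], by rw [h2, g2], g3⟩

lemma histTo_trans (X : Run D) {i j l : ℕ} (hij : i ≤ j) (hjl : j ≤ l) (p : List ℕ) :
    X.histTo i l p = X.histTo i j (X.histTo j l p) := by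
  induction l, hjl using Nat.le_induction generalizing p with
  | base => rw [histTo_self X (le_refl j)]
  | succ l hjl ih =>
    rw [histTo_succ, histTo_succ, if_neg (by omega), if_neg (by omega), ih]

lemma stepHist_sub (X : Run D) {j : ℕ} (hj : j < X.len) {p : List ℕ}
    (hp : sub? (X.cfg (j + 1)).2 p ≠ none) : sub? (X.cfg j).2 (X.stepHist j p) ≠ none := by
  have hs := X.ok j hj
  rw [Run.stepHist]
  rcases hc : X.cfg j with ⟨q, s⟩
  rcases hc' : X.cfg (j + 1) with ⟨q₁, s₁⟩
  rw [hc, hc'] at hs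
  rw [hc'] at hp
  revert hs
  generalize X.lab j = lab
  intro hs
  cases hs with
  | read a hval htop hδ =>
    simp only [htop, hδ]
    exact hp
  | op hval htop hδ happ =>
    simp only [htop, hδ]
    exact applyOp_hist_sub hval happ hp

lemma histTo_sub (X : Run D) {i j : ℕ} (hij : i ≤ j) (hj : j ≤ X.len) {p : List ℕ}
    (hp : sub? (X.cfg j).2 p ≠ none) : sub? (X.cfg i).2 (X.histTo i j p) ≠ none := by
  induction j generalizing p with
  | zero =>
    have : i = 0 := by omega
    subst this
    exact hp
  | succ j ih =>
    rw [histTo_succ]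
    split
    · have : i = j + 1 := by omega
      subst this
      exact hp
    · exact ih (by omega) (by omega) (stepHist_sub X (by omega) hp)

lemma stepHist_congr {X Y : Run D} {j j' : ℕ} (h : X.cfg j = Y.cfg j') :
    X.stepHist j = Y.stepHist j' := by
  rw [Run.stepHist, Run.stepHist, h]

lemma histTo_congr {X Y : Run D} {m : ℕ} (hc : ∀ x ≤ m, X.cfg x = Y.cfg x) {j : ℕ}
    (hj : j ≤ m) (p : List ℕ) : X.histTo 0 j p = Y.histTo 0 j p := by
  induction j generalizing p with
  | zero => rfl
  | succ j ih =>
    rw [histTo_succ, histTo_succ, if_neg (by omega), if_neg (by omega),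
      stepHist_congr (hc j (by omega)), ih (by omega)]

lemma histTo_shift {X Y : Run D} {b m : ℕ} (hc : ∀ x ≤ m, X.cfg (b + x) = Y.cfg x) {j : ℕ}
    (hj : j ≤ m) (p : List ℕ) : X.histTo b (b + j) p = Y.histTo 0 j p := by
  induction j generalizing p with
  | zero => exact histTo_self X (by omega) p
  | succ j ih =>
    have hb : b + (j + 1) = (b + j) + 1 := by omega
    rw [hb, histTo_succ, histTo_succ, if_neg (by omega), if_neg (by omega),
      stepHist_congr (hc j (by omega)), ih (by omega)]

lemma exists_concat_of_length {α : Type} (l : List α) (t : ℕ) (h : l.length = t + 1) :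
    ∃ x, l = l.take t ++ [x] := by
  refine ⟨l[t]'(by omega), ?_⟩
  conv_lhs => rw [← List.take_append_drop t l]
  rw [List.drop_eq_getElem_cons (by omega), List.drop_eq_nil_of_le (by omega)]

end Aux6Run

/-- Let `1 ≤ k ≤ n` and let `S ∘ T` be a `(k-1)`-upper run of an
`n`-DPDA in which the second part `T` is `k`-upper.  Then `S` is `(k-1)`-upper. -/
theorem statement6 {n : ℕ} (hn : 1 ≤ n) {A Γ : Type} [Finite A] [Finite Γ]
    {D : DPDA n A Γ} (k : ℕ) (hk1 : 1 ≤ k) (hk : k ≤ n) (R S T : Run D)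
    (hST : IsComp R S T) (hR : R.IsUpper (k - 1)) (hT : T.IsUpper k) :
    S.IsUpper (k - 1) := by
  obtain ⟨hcc, hlen, hcS, -, hcT, -⟩ := hST
  have hns : n - (k - 1) = n - k + 1 := by omega
  unfold Run.IsUpper at hR hT ⊢
  rw [hns] at hR ⊢
  by_cases hS0 : S.len = 0
  · rw [hS0, histTo_zero]
  by_cases hT0 : T.len = 0
  · have hRlen : R.len = S.len := by omega
    have hcend : R.cfg S.len = S.cfg S.len := hcS S.len le_rfl
    have h0 : R.cfg 0 = S.cfg 0 := hcS 0 (by omega)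
    rw [hRlen, hcend, h0, histTo_congr hcS le_rfl] at hR
    exact hR
  have hS1 : 1 ≤ S.len := by omega
  have hT1 : 1 ≤ T.len := by omega
  have hm0n : n - k + 1 ≤ n := by omega
  have hvS0 : IsValid n (S.cfg 0).2 := S.validAt hS1 (by omega)
  have hvT0 : IsValid n (T.cfg 0).2 := T.validAt hT1 (by omega)
  have hvTE : IsValid n (T.cfg T.len).2 := T.validAt hT1 le_rfl
  -- reduce the history along `R` to histories along `S` and `T`
  have key : ∀ q : List ℕ, R.histTo 0 R.len q = S.histTo 0 S.len (T.histTo 0 T.len q) := by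
    intro q
    have h1 : R.histTo 0 R.len q = R.histTo 0 S.len (R.histTo S.len R.len q) :=
      histTo_trans R (Nat.zero_le _) (by omega) q
    have h2 : R.histTo S.len R.len q = T.histTo 0 T.len q := by
      have := histTo_shift (X := R) (Y := T) (b := S.len) (m := T.len) hcT le_rfl q
      rwa [← hlen] at this
    rw [h1, h2, histTo_congr hcS le_rfl]
  have hREnd : R.cfg R.len = T.cfg T.len := by rw [hlen]; exact hcT T.len le_rfl
  have hR0 : R.cfg 0 = S.cfg 0 := hcS 0 (by omega)
  rw [hREnd, hR0, key] at hR
  -- hR : S.histTo 0 S.len (T.histTo 0 T.len (topAddr (T.cfg T.len).2 (n-k+1))) = ...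
  have hq_take : (T.histTo 0 T.len (topAddr (T.cfg T.len).2 (n - k + 1))).take (n - k)
      = topAddr (T.cfg 0).2 (n - k) := by
    rw [take_histTo, topAddr_take (Nat.le_succ (n - k)), hT]
  have hq_len : (T.histTo 0 T.len (topAddr (T.cfg T.len).2 (n - k + 1))).length = n - k + 1 := by
    rw [length_histTo, length_topAddr hvTE hm0n]
  obtain ⟨jq, hq⟩ := exists_concat_of_length _ _ hq_len
  rw [hq_take] at hq
  -- hq : T.histTo 0 T.len (topAddr ... (n-k+1)) = topAddr (T.cfg 0).2 (n-k) ++ [jq]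
  obtain ⟨tS, htS, htSv⟩ := sub?_topAddr hvT0 (show n - k ≤ n by omega)
  have hk' : n - (n - k) = (n - (n - k) - 1) + 1 := by omega
  rw [hk'] at htSv
  obtain ⟨lS, rfl⟩ : ∃ lS, tS = St.node lS := by
    cases tS with
    | leaf γ => exact absurd htSv (by simp [IsValid])
    | node lS => exact ⟨lS, rfl⟩
  have hlSne : lS ≠ [] := htSv.1
  have hszS : sizeAt (T.cfg 0).2 (topAddr (T.cfg 0).2 (n - k)) = lS.length := sizeAt_node htS
  -- jq is a legal index in the top k-stack of T(0)
  have hpTres : sub? (T.cfg T.len).2 (topAddr (T.cfg T.len).2 (n - k + 1)) ≠ none := by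
    obtain ⟨t, ht, -⟩ := sub?_topAddr hvTE hm0n
    rw [ht]; simp
  have hqres := histTo_sub T (Nat.zero_le _) le_rfl hpTres
  rw [hq, sub?_append, htS] at hqres
  simp only [Option.bind_some] at hqres
  have hjq : jq < lS.length := by
    by_contra hge
    rw [sub?_node_cons_none (List.getElem?_eq_none (by omega))] at hqres
    exact hqres rfl
  have hq' : topAddr (T.cfg 0).2 (n - k + 1) = topAddr (T.cfg 0).2 (n - k) ++ [lS.length - 1] := by
    rw [topAddr_succ hvT0 hm0n, hszS]
  -- monotonicity of histories along S
  obtain ⟨v, a, a', hva, hva', haa⟩ := histTo_mono S 0 S.len (topAddr (T.cfg 0).2 (n - k))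
    (show jq ≤ lS.length - 1 by omega)
  rw [hq, hva] at hR
  -- decompose the top (k-1)-stack address of S(0)
  obtain ⟨t0, ht0, ht0v⟩ := sub?_topAddr hvS0 (show n - k ≤ n by omega)
  rw [hk'] at ht0v
  obtain ⟨l0, rfl⟩ : ∃ l0, t0 = St.node l0 := by
    cases t0 with
    | leaf γ => exact absurd ht0v (by simp [IsValid])
    | node l0 => exact ⟨l0, rfl⟩
  have hsz0 : sizeAt (S.cfg 0).2 (topAddr (S.cfg 0).2 (n - k)) = l0.length := sizeAt_node ht0
  have hP' : topAddr (S.cfg 0).2 (n - k + 1)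
      = topAddr (S.cfg 0).2 (n - k) ++ [l0.length - 1] := by
    rw [topAddr_succ hvS0 hm0n, hsz0]
  rw [hP'] at hR
  obtain ⟨hv_eq, ha_eq0⟩ := List.append_inj' hR rfl
  have ha_eq : a = l0.length - 1 := by simpa using ha_eq0
  -- a' is a legal index in the top k-stack of S(0)
  have hq'res : sub? (S.cfg S.len).2 (topAddr (T.cfg 0).2 (n - k + 1)) ≠ none := by
    rw [hcc]
    obtain ⟨t, ht, -⟩ := sub?_topAddr hvT0 hm0n
    rw [ht]; simp
  have hhist := histTo_sub S (Nat.zero_le _) le_rfl hq'res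
  rw [hq', hva', hv_eq, sub?_append, ht0] at hhist
  simp only [Option.bind_some] at hhist
  have ha' : a' < l0.length := by
    by_contra hge
    rw [sub?_node_cons_none (List.getElem?_eq_none (by omega))] at hhist
    exact hhist rfl
  -- conclude
  rw [hcc, hq', hva', hv_eq, hP']
  have hfin : a' = l0.length - 1 := by omega
  rw [hfin]

end HOPDA
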